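/- The left boundary operator b_l satisfies the blob-algebra relations: b_l² = b_l; e_1 b_l e_1 = y_l · e_1 with blob weight y_l = sinh(h(α_l+1))/sinh(hα_l); and b_l e_i = e_i b_l for all 2 ≤ i ≤ N−1. -/

import Mathlib

noncomputable section

/-- Basis labels of `(ℂ²)^{⊗N}`: a state (0 = ↑, 1 = ↓) for each of the `N` sites. -/
abbrev Conf (N : ℕ) := Fin N → Fin 2

def pauliX : Matrix (Fin 2) (Fin 2) ℂ := !![0, 1; 1, 0]
def pauliY : Matrix (Fin 2) (Fin 2) ℂ := !![0, -Complex.I; Complex.I, 0]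
def pauliZ : Matrix (Fin 2) (Fin 2) ℂ := !![1, 0; 0, -1]
/-- `σ⁺ = (σˣ + iσʸ)/2`. -/
def pauliP : Matrix (Fin 2) (Fin 2) ℂ := !![0, 1; 0, 0]
/-- `σ⁻ = (σˣ − iσʸ)/2`. -/
def pauliM : Matrix (Fin 2) (Fin 2) ℂ := !![0, 0; 1, 0]

open Fin.NatCast in
/-- `X_j`: the operator on `(ℂ²)^{⊗N}` acting as the 2×2 matrix `X` on the `j`-th tensor
factor (sites labelled `1,…,N`) and as the identity on the others. -/
def siteOp (N : ℕ) [NeZero N] (X : Matrix (Fin 2) (Fin 2) ℂ) (j : ℕ) :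
    Matrix (Conf N) (Conf N) ℂ :=
  Matrix.of fun f g =>
    X (f ((j - 1 : ℕ) : Fin N)) (g ((j - 1 : ℕ) : Fin N)) *
      ∏ k ∈ Finset.univ.erase ((j - 1 : ℕ) : Fin N), if f k = g k then (1 : ℂ) else 0

/-- The Temperley–Lieb generator
`e_i = −(1/2)(σˣᵢσˣᵢ₊₁ + σʸᵢσʸᵢ₊₁ + cosh(h)(σᶻᵢσᶻᵢ₊₁ − 1) + sinh(h)(σᶻᵢ₊₁ − σᶻᵢ))`. -/
def eOp (N : ℕ) [NeZero N] (h : ℂ) (i : ℕ) : Matrix (Conf N) (Conf N) ℂ :=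
  (-(1 / 2 : ℂ)) •
    (siteOp N pauliX i * siteOp N pauliX (i + 1)
      + siteOp N pauliY i * siteOp N pauliY (i + 1)
      + Complex.cosh h • (siteOp N pauliZ i * siteOp N pauliZ (i + 1) - 1)
      + Complex.sinh h • (siteOp N pauliZ (i + 1) - siteOp N pauliZ i))

/-- The left boundary operator
`b_l = (1/(2 sinh(hα_l)))(i e^{hθ_l} σ⁺₁ + i e^{−hθ_l} σ⁻₁ + cosh(hα_l) σᶻ₁) + (1/2)·Id`. -/
def blobL (N : ℕ) [NeZero N] (h αl θl : ℂ) : Matrix (Conf N) (Conf N) ℂ :=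
  (1 / (2 * Complex.sinh (h * αl))) •
    ((Complex.I * Complex.exp (h * θl)) • siteOp N pauliP 1
      + (Complex.I * Complex.exp (-(h * θl))) • siteOp N pauliM 1
      + Complex.cosh (h * αl) • siteOp N pauliZ 1)
  + (1 / 2 : ℂ) • 1

/-- The right boundary operator
`b_r = −(1/(2 sinh(hα_r)))(i e^{hθ_r} σ⁺_N + i e^{−hθ_r} σ⁻_N + cosh(hα_r) σᶻ_N) + (1/2)·Id`. -/
def blobR (N : ℕ) [NeZero N] (h αr θr : ℂ) : Matrix (Conf N) (Conf N) ℂ :=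
  (-(1 / (2 * Complex.sinh (h * αr)))) •
    ((Complex.I * Complex.exp (h * θr)) • siteOp N pauliP N
      + (Complex.I * Complex.exp (-(h * θr))) • siteOp N pauliM N
      + Complex.cosh (h * αr) • siteOp N pauliZ N)
  + (1 / 2 : ℂ) • 1

namespace BlobAux
open Finset Matrix Complex Fin.NatCast

variable {N : ℕ} [NeZero N]

/-- single-site operator at abstract position `p`. -/
def sOp (N : ℕ) [NeZero N] (p : Fin N) (X : Matrix (Fin 2) (Fin 2) ℂ) :
    Matrix (Conf N) (Conf N) ℂ :=
  Matrix.of fun f g =>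
    X (f p) (g p) * ∏ k ∈ Finset.univ.erase p, if f k = g k then (1 : ℂ) else 0

lemma siteOp_eq (X : Matrix (Fin 2) (Fin 2) ℂ) (j : ℕ) :
    siteOp N X j = sOp N ((j - 1 : ℕ) : Fin N) X := rfl

/-- two-site operator at positions `p ≠ q`. -/
def kOp (N : ℕ) [NeZero N] (p q : Fin N) (M : Matrix (Fin 2 × Fin 2) (Fin 2 × Fin 2) ℂ) :
    Matrix (Conf N) (Conf N) ℂ :=
  Matrix.of fun f g =>
    M (f p, f q) (g p, g q) *
      ∏ k ∈ (Finset.univ.erase p).erase q, if f k = g k then (1 : ℂ) else 0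

lemma kOp_mul {p q : Fin N} (hpq : p ≠ q) (M M' : Matrix (Fin 2 × Fin 2) (Fin 2 × Fin 2) ℂ) :
    kOp N p q M * kOp N p q M' = kOp N p q (M * M') := by
  ext f g
  simp only [kOp, Matrix.mul_apply, Matrix.of_apply]
  rw [Finset.sum_mul]
  rw [← Finset.sum_filter_of_ne
    (p := fun h : Conf N => ∀ k ∈ (Finset.univ.erase p).erase q, f k = h k)
    (by
      intro x _ hx k hk
      by_contra hne
      apply hx
      have : (∏ k ∈ (Finset.univ.erase p).erase q, if f k = x k then (1:ℂ) else 0) = 0 := by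
        rw [Finset.prod_boole]
        simp only [ite_eq_right_iff, one_ne_zero]
        intro hall
        exact hne (hall k hk)
      simp [this])]
  refine Finset.sum_nbij' (fun h => (h p, h q))
    (fun r => Function.update (Function.update f p r.1) q r.2) ?_ ?_ ?_ ?_ ?_
  · intro a _; exact Finset.mem_univ _
  · intro r _
    simp only [Finset.mem_filter, Finset.mem_univ, true_and]
    intro k hk
    simp only [Finset.mem_erase] at hk
    rw [Function.update_of_ne hk.1, Function.update_of_ne hk.2.1]
  · intro a ha
    simp only [Finset.mem_filter, Finset.mem_univ, true_and] at ha
    funext k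
    show Function.update (Function.update f p (a p)) q (a q) k = a k
    by_cases hkq : k = q
    · subst hkq; simp
    · rw [Function.update_of_ne hkq]
      by_cases hkp : k = p
      · subst hkp; simp
      · rw [Function.update_of_ne hkp]
        exact ha k (by simp [hkp, hkq])
  · intro r _
    simp [Function.update_of_ne hpq, Prod.ext_iff]
  · intro a ha
    simp only [Finset.mem_filter, Finset.mem_univ, true_and] at ha
    have h1 : (∏ k ∈ (Finset.univ.erase p).erase q, if f k = a k then (1:ℂ) else 0) = 1 := by
      rw [Finset.prod_boole, if_pos ha]
    have h2 : ∀ k ∈ (Finset.univ.erase p).erase q,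
        (if a k = g k then (1:ℂ) else 0) = (if f k = g k then (1:ℂ) else 0) := by
      intro k hk; rw [← ha k hk]
    rw [h1, Finset.prod_congr rfl h2]
    ring

end BlobAux
namespace BlobAux
open Finset Matrix Complex Fin.NatCast

variable {N : ℕ} [NeZero N]

def emb1 (X : Matrix (Fin 2) (Fin 2) ℂ) : Matrix (Fin 2 × Fin 2) (Fin 2 × Fin 2) ℂ :=
  Matrix.of fun r s => X r.1 s.1 * (if r.2 = s.2 then (1 : ℂ) else 0)

def emb2 (X : Matrix (Fin 2) (Fin 2) ℂ) : Matrix (Fin 2 × Fin 2) (Fin 2 × Fin 2) ℂ :=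
  Matrix.of fun r s => (if r.1 = s.1 then (1 : ℂ) else 0) * X r.2 s.2

lemma kOp_add (p q : Fin N) (M M' : Matrix (Fin 2 × Fin 2) (Fin 2 × Fin 2) ℂ) :
    kOp N p q (M + M') = kOp N p q M + kOp N p q M' := by
  ext f g; simp [kOp]; ring

lemma kOp_sub (p q : Fin N) (M M' : Matrix (Fin 2 × Fin 2) (Fin 2 × Fin 2) ℂ) :
    kOp N p q (M - M') = kOp N p q M - kOp N p q M' := by
  ext f g; simp [kOp]; ring

lemma kOp_smul (p q : Fin N) (c : ℂ) (M : Matrix (Fin 2 × Fin 2) (Fin 2 × Fin 2) ℂ) :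
    kOp N p q (c • M) = c • kOp N p q M := by
  ext f g; simp [kOp]; ring

lemma kOp_one {p q : Fin N} (hpq : p ≠ q) : kOp N p q 1 = 1 := by
  ext f g
  simp only [kOp, Matrix.of_apply, Matrix.one_apply, Finset.prod_boole, Prod.mk.injEq]
  by_cases hfg : f = g
  · subst hfg; simp
  · have : ¬(f p = g p ∧ f q = g q ∧ ∀ k ∈ (Finset.univ.erase p).erase q, f k = g k) := by
      rintro ⟨h1, h2, h3⟩
      apply hfg; funext k
      by_cases hkp : k = p
      · subst hkp; exact h1
      by_cases hkq : k = q
      · subst hkq; exact h2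
      · exact h3 k (by simp [hkp, hkq])
    rw [if_neg hfg]
    push_neg at this
    by_cases h1 : f p = g p
    · by_cases h2 : f q = g q
      · obtain ⟨k, hk, hne⟩ := this h1 h2
        rw [if_pos ⟨h1, h2⟩, if_neg (fun hall => hne (hall k hk))]; ring
      · simp [h2]
    · simp [h1]

lemma sOp_eq_kOp1 {p q : Fin N} (hpq : p ≠ q) (X : Matrix (Fin 2) (Fin 2) ℂ) :
    sOp N p X = kOp N p q (emb1 X) := by
  ext f g
  simp only [sOp, kOp, emb1, Matrix.of_apply]
  rw [← Finset.mul_prod_erase (Finset.univ.erase p)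
    (fun k => if f k = g k then (1:ℂ) else 0) (show q ∈ Finset.univ.erase p by simp [Ne.symm hpq])]
  ring

lemma sOp_eq_kOp2 {p q : Fin N} (hpq : p ≠ q) (X : Matrix (Fin 2) (Fin 2) ℂ) :
    sOp N q X = kOp N p q (emb2 X) := by
  ext f g
  simp only [sOp, kOp, emb2, Matrix.of_apply]
  rw [Finset.erase_right_comm, ← Finset.mul_prod_erase (Finset.univ.erase q)
    (fun k => if f k = g k then (1:ℂ) else 0) (show p ∈ Finset.univ.erase q by simp [hpq])]
  ring

lemma emb1_mul_emb2 (X Y : Matrix (Fin 2) (Fin 2) ℂ) :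
    emb1 X * emb2 Y = Matrix.of fun r s => X r.1 s.1 * Y r.2 s.2 := by
  ext ⟨a, b⟩ ⟨c, d⟩
  simp [emb1, emb2, Matrix.mul_apply, Fintype.sum_prod_type, Fin.sum_univ_two,
    Finset.mul_sum, apply_ite]

lemma emb2_mul_emb1 (X Y : Matrix (Fin 2) (Fin 2) ℂ) :
    emb2 Y * emb1 X = Matrix.of fun r s => X r.1 s.1 * Y r.2 s.2 := by
  ext ⟨a, b⟩ ⟨c, d⟩
  simp [emb1, emb2, Matrix.mul_apply, Fintype.sum_prod_type, Fin.sum_univ_two,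
    Finset.mul_sum, apply_ite]
  ring

lemma emb1_mul_emb1 (X Y : Matrix (Fin 2) (Fin 2) ℂ) :
    emb1 X * emb1 Y = emb1 (X * Y) := by
  ext ⟨a, b⟩ ⟨c, d⟩
  simp [emb1, Matrix.mul_apply, Fintype.sum_prod_type, Fin.sum_univ_two, apply_ite]
  fin_cases b <;> fin_cases d <;> simp

lemma sOp_comm {p q : Fin N} (hpq : p ≠ q) (X Y : Matrix (Fin 2) (Fin 2) ℂ) :
    sOp N p X * sOp N q Y = sOp N q Y * sOp N p X := by
  rw [sOp_eq_kOp1 hpq X, sOp_eq_kOp2 hpq Y, kOp_mul hpq, kOp_mul hpq,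
    emb1_mul_emb2, emb2_mul_emb1]

lemma sOp_mul {p q : Fin N} (hpq : p ≠ q) (X Y : Matrix (Fin 2) (Fin 2) ℂ) :
    sOp N p X * sOp N p Y = sOp N p (X * Y) := by
  rw [sOp_eq_kOp1 hpq X, sOp_eq_kOp1 hpq Y, kOp_mul hpq, emb1_mul_emb1,
    ← sOp_eq_kOp1 hpq]

lemma sOp_one {p q : Fin N} (hpq : p ≠ q) : sOp N p 1 = 1 := by
  have : (1 : Matrix (Fin 2) (Fin 2) ℂ) = 1 * 1 := by rw [one_mul]
  rw [sOp_eq_kOp1 hpq 1, show emb1 (1 : Matrix (Fin 2) (Fin 2) ℂ) = 1 by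
    ext ⟨a, b⟩ ⟨c, d⟩; simp only [emb1, Matrix.of_apply, Matrix.one_apply, Prod.mk.injEq]
    split_ifs <;> simp_all, kOp_one hpq]

lemma sOp_add (p : Fin N) (X Y : Matrix (Fin 2) (Fin 2) ℂ) :
    sOp N p (X + Y) = sOp N p X + sOp N p Y := by
  ext f g; simp [sOp]; ring

lemma sOp_smul (p : Fin N) (c : ℂ) (X : Matrix (Fin 2) (Fin 2) ℂ) :
    sOp N p (c • X) = c • sOp N p X := by
  ext f g; simp [sOp]; ring

end BlobAux
namespace BlobAux
open Finset Matrix Complex Fin.NatCast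

variable {N : ℕ} [NeZero N]

def B2 (h αl θl : ℂ) : Matrix (Fin 2) (Fin 2) ℂ :=
  (1 / (2 * Complex.sinh (h * αl))) •
    ((Complex.I * Complex.exp (h * θl)) • pauliP
      + (Complex.I * Complex.exp (-(h * θl))) • pauliM
      + Complex.cosh (h * αl) • pauliZ)
  + (1 / 2 : ℂ) • 1

set_option maxHeartbeats 1000000 in
lemma B2_sq (h αl θl : ℂ) (hαl : Complex.sinh (h * αl) ≠ 0) :
    B2 h αl θl * B2 h αl θl = B2 h αl θl := by
  have hθ : Complex.exp (-(h * θl)) = (Complex.exp (h * θl))⁻¹ := Complex.exp_neg _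
  have h1 : Complex.cosh (h * αl) ^ 2 = 1 + Complex.sinh (h * αl) ^ 2 := by
    have := Complex.cosh_sq_sub_sinh_sq (h * αl); linear_combination this
  ext a c
  fin_cases a <;> fin_cases c <;>
  · simp [B2, pauliP, pauliM, pauliZ, Matrix.mul_apply, Fin.sum_univ_two,
      Matrix.one_apply, hθ]
    field_simp [hαl]
    all_goals ring_nf
    all_goals try simp only [Complex.I_sq, h1]
    all_goals try field_simp [hαl]
    all_goals try ring

end BlobAux
namespace BlobAux
open Finset Matrix Complex Fin.NatCast

variable {N : ℕ} [NeZero N]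

def Ee (h : ℂ) : Matrix (Fin 2 × Fin 2) (Fin 2 × Fin 2) ℂ :=
  (-(1 / 2 : ℂ)) •
    (emb1 pauliX * emb2 pauliX + emb1 pauliY * emb2 pauliY
      + Complex.cosh h • (emb1 pauliZ * emb2 pauliZ - 1)
      + Complex.sinh h • (emb2 pauliZ - emb1 pauliZ))

lemma blobL_eq {q : Fin N} (hq : (0 : Fin N) ≠ q) (h αl θl : ℂ) :
    blobL N h αl θl = sOp N 0 (B2 h αl θl) := by
  have h0 : ((1 - 1 : ℕ) : Fin N) = 0 := by norm_num
  rw [blobL, siteOp_eq, siteOp_eq, siteOp_eq, h0, B2]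
  simp only [sOp_add, sOp_smul, sOp_one hq]

lemma eOp_one_eq (h01 : (0 : Fin N) ≠ ((1 : ℕ) : Fin N)) (h : ℂ) :
    eOp N h 1 = kOp N 0 ((1 : ℕ) : Fin N) (Ee h) := by
  have e1 : ((1 - 1 : ℕ) : Fin N) = 0 := by norm_num
  have e2 : ((1 + 1 - 1 : ℕ) : Fin N) = ((1 : ℕ) : Fin N) := by norm_num
  rw [eOp, siteOp_eq, siteOp_eq, siteOp_eq, siteOp_eq, siteOp_eq, siteOp_eq, e1, e2]
  simp only [sOp_eq_kOp1 h01, sOp_eq_kOp2 h01, kOp_mul h01, Ee,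
    kOp_smul, kOp_add, kOp_sub, kOp_one h01]

lemma Ee_entries (h : ℂ) :
    Ee h = Matrix.of fun r s =>
      (-(1 / 2 : ℂ)) *
        (pauliX r.1 s.1 * pauliX r.2 s.2 + pauliY r.1 s.1 * pauliY r.2 s.2
          + Complex.cosh h * (pauliZ r.1 s.1 * pauliZ r.2 s.2
              - (if r = s then (1 : ℂ) else 0))
          + Complex.sinh h * ((if r.1 = s.1 then (1 : ℂ) else 0) * pauliZ r.2 s.2
              - pauliZ r.1 s.1 * (if r.2 = s.2 then (1 : ℂ) else 0))) := by
  ext r s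
  simp only [Ee, emb1_mul_emb2]
  simp only [emb1, emb2, Matrix.smul_apply, Matrix.add_apply,
    Matrix.sub_apply, Matrix.of_apply, Matrix.one_apply, smul_eq_mul]

lemma emb1_B2_entries (h αl θl : ℂ) :
    emb1 (B2 h αl θl) = Matrix.of fun r s =>
      ((1 / (2 * Complex.sinh (h * αl))) *
        ((Complex.I * Complex.exp (h * θl)) * pauliP r.1 s.1
          + (Complex.I * Complex.exp (-(h * θl))) * pauliM r.1 s.1
          + Complex.cosh (h * αl) * pauliZ r.1 s.1)
        + (1 / 2 : ℂ) * (if r.1 = s.1 then (1 : ℂ) else 0)) *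
        (if r.2 = s.2 then (1 : ℂ) else 0) := by
  ext r s
  simp only [emb1, B2, Matrix.smul_apply, Matrix.add_apply, Matrix.of_apply,
    Matrix.one_apply, smul_eq_mul]

set_option maxHeartbeats 2000000 in
lemma key (h αl θl : ℂ) (hαl : Complex.sinh (h * αl) ≠ 0) :
    Ee h * emb1 (B2 h αl θl) * Ee h
      = (Complex.sinh (h * (αl + 1)) / Complex.sinh (h * αl)) • Ee h := by
  have hy : Complex.sinh (h * (αl + 1))
      = Complex.sinh (h * αl) * Complex.cosh h + Complex.cosh (h * αl) * Complex.sinh h := by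
    rw [mul_add, mul_one, Complex.sinh_add]
  have h1 : Complex.cosh (h * αl) ^ 2 = 1 + Complex.sinh (h * αl) ^ 2 := by
    have := Complex.cosh_sq_sub_sinh_sq (h * αl); linear_combination this
  have h2 : Complex.cosh h ^ 2 = 1 + Complex.sinh h ^ 2 := by
    have := Complex.cosh_sq_sub_sinh_sq h; linear_combination this
  have hdiv : Complex.sinh (h * αl) / Complex.sinh (h * αl) = 1 := div_self hαl
  have hCS := Complex.cosh_sq_sub_sinh_sq h
  rw [hy, Ee_entries, emb1_B2_entries]
  ext r s
  obtain ⟨a, b⟩ := r; obtain ⟨c, d⟩ := s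
  fin_cases a <;> fin_cases b <;> fin_cases c <;> fin_cases d <;>
  · simp [pauliX, pauliY, pauliZ, pauliP, pauliM, -Prod.mk_zero_zero, -Prod.mk_one_one,
      Matrix.mul_apply, Fintype.sum_prod_type, Fin.sum_univ_two, Prod.mk.injEq]
    all_goals try ring
    all_goals try linear_combination (Complex.cosh h) * hdiv
    all_goals try linear_combination (Complex.cosh (h * αl) / (2 * Complex.sinh (h * αl)) - 1 / 2) * hCS - (Complex.cosh h ^ 2 + Complex.cosh h * Complex.sinh h) * hdiv
    all_goals try linear_combination (-(Complex.cosh (h * αl) / (2 * Complex.sinh (h * αl)) + 1 / 2)) * hCS - (Complex.cosh h ^ 2 - Complex.cosh h * Complex.sinh h) * hdiv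

end BlobAux
open Fin.NatCast in
/-- The left boundary operator `b_l` satisfies the blob-algebra relations with
blob weight `y_l = sinh(h(α_l+1))/sinh(hα_l)`. -/
theorem left_blob_relations (N : ℕ) [NeZero N] (hN : 2 ≤ N) (h αl θl : ℂ)
    (hαl : Complex.sinh (h * αl) ≠ 0) :
    blobL N h αl θl * blobL N h αl θl = blobL N h αl θl ∧
    eOp N h 1 * blobL N h αl θl * eOp N h 1
      = (Complex.sinh (h * (αl + 1)) / Complex.sinh (h * αl)) • eOp N h 1 ∧
    (∀ i : ℕ, 2 ≤ i → i ≤ N - 1 →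
      blobL N h αl θl * eOp N h i = eOp N h i * blobL N h αl θl) := by
  have h01 : (0 : Fin N) ≠ ((1 : ℕ) : Fin N) := by
    intro hc
    have hv := congrArg Fin.val hc
    simp only [Fin.val_zero, Fin.val_natCast] at hv
    rw [Nat.mod_eq_of_lt (by omega : 1 < N)] at hv
    omega
  refine ⟨?_, ?_, ?_⟩
  · rw [BlobAux.blobL_eq h01 h αl θl, BlobAux.sOp_mul h01,
      BlobAux.B2_sq h αl θl hαl]
  · rw [BlobAux.eOp_one_eq h01 h, BlobAux.blobL_eq h01 h αl θl,
      BlobAux.sOp_eq_kOp1 h01, BlobAux.kOp_mul h01, BlobAux.kOp_mul h01,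
      BlobAux.key h αl θl hαl, BlobAux.kOp_smul]
  · intro i h2i hiN
    have hp : (0 : Fin N) ≠ ((i - 1 : ℕ) : Fin N) := by
      intro hc
      have hv := congrArg Fin.val hc
      simp only [Fin.val_zero, Fin.val_natCast] at hv
      rw [Nat.mod_eq_of_lt (by omega : i - 1 < N)] at hv
      omega
    have hq : (0 : Fin N) ≠ ((i + 1 - 1 : ℕ) : Fin N) := by
      intro hc
      have hv := congrArg Fin.val hc
      simp only [Fin.val_zero, Fin.val_natCast] at hv
      rw [Nat.mod_eq_of_lt (by omega : i + 1 - 1 < N)] at hv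
      omega
    rw [BlobAux.blobL_eq hp h αl θl]
    have cb : ∀ X : Matrix (Fin 2) (Fin 2) ℂ,
        Commute (BlobAux.sOp N 0 (BlobAux.B2 h αl θl)) (BlobAux.sOp N ((i - 1 : ℕ) : Fin N) X) :=
      fun X => BlobAux.sOp_comm hp _ X
    have cb' : ∀ X : Matrix (Fin 2) (Fin 2) ℂ,
        Commute (BlobAux.sOp N 0 (BlobAux.B2 h αl θl))
          (BlobAux.sOp N ((i + 1 - 1 : ℕ) : Fin N) X) :=
      fun X => BlobAux.sOp_comm hq _ X
    have C : Commute (BlobAux.sOp N 0 (BlobAux.B2 h αl θl)) (eOp N h i) := by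
      rw [eOp, BlobAux.siteOp_eq pauliX i, BlobAux.siteOp_eq pauliX (i + 1),
        BlobAux.siteOp_eq pauliY i, BlobAux.siteOp_eq pauliY (i + 1),
        BlobAux.siteOp_eq pauliZ i, BlobAux.siteOp_eq pauliZ (i + 1)]
      exact (((((cb pauliX).mul_right (cb' pauliX)).add_right
        ((cb pauliY).mul_right (cb' pauliY))).add_right
        ((((cb pauliZ).mul_right (cb' pauliZ)).sub_right
          (Commute.one_right _)).smul_right _)).add_right
        (((cb' pauliZ).sub_right (cb pauliZ)).smul_right _)).smul_right _
    exact C
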